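/- Let ν₀ ∈ S¹, let x₀, y₀ ∈ ℝ² with |x₀ - y₀| = 1, α ∈ (0, 1/8), and let f ∈ L¹(M) be nonnegative, where M = conv(B_{2α}(x₀) ∪ B_{2α}(y₀)). Then ∫_{B_α(x₀) × B_α(y₀)} (∫_{[x,y]} f dH¹) dx dy ≤ C α³ ∫_M f dz, where [x,y] denotes the line segment from x to y and C is a universal constant. -/

import Mathlib

open MeasureTheory

noncomputable section

abbrev E2 := EuclideanSpace ℝ (Fin 2)

section AuxProofs
open Set Metric Pointwise ENNReal

namespace AvgEstAux

lemma integral_le_lintegral_ofReal {X : Type*} [MeasurableSpace X] (μ : Measure X)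
    (g : X → ℝ) (hg : ∀ x, 0 ≤ g x) :
    ∫ x, g x ∂μ ≤ (∫⁻ x, ENNReal.ofReal (g x) ∂μ).toReal := by
  by_cases h : Integrable g μ
  · rw [integral_eq_lintegral_of_nonneg_ae (Filter.Eventually.of_forall hg) h.1]
  · rw [integral_undef h]; exact ENNReal.toReal_nonneg

lemma ofReal_integral_le_lintegral {X : Type*} [MeasurableSpace X] (μ : Measure X)
    (g : X → ℝ) (hg : ∀ x, 0 ≤ g x) :
    ENNReal.ofReal (∫ x, g x ∂μ) ≤ ∫⁻ x, ENNReal.ofReal (g x) ∂μ := by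
  by_cases h : Integrable g μ
  · rw [ofReal_integral_eq_lintegral_ofReal h (Filter.Eventually.of_forall hg)]
  · rw [integral_undef h]; simp

lemma null_preimage_affine {t : ℝ} (ht : t ≠ 0) (v : E2) {T : Set E2}
    (hT : volume T = 0) : volume {y : E2 | v + t • y ∈ T} = 0 := by
  have h1 : volume ((fun z : E2 => v + z) ⁻¹' T) = 0 := by
    rw [measure_preimage_add]; exact hT
  have h2 : {y : E2 | v + t • y ∈ T} = t⁻¹ • ((fun z : E2 => v + z) ⁻¹' T) := by
    ext y
    rw [Set.mem_smul_set_iff_inv_smul_mem₀ (inv_ne_zero ht)]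
    simp [Set.mem_preimage]
  rw [h2, Measure.addHaar_smul]
  simp [h1]

lemma map_affine (t : ℝ) (ht : t ≠ 0) (v : E2) :
    Measure.map (fun y : E2 => v + t • y) volume
      = ENNReal.ofReal |(t ^ 2)⁻¹| • volume := by
  have hcomp : (fun y : E2 => v + t • y) = (fun z : E2 => v + z) ∘ (fun y : E2 => t • y) := rfl
  rw [hcomp, ← Measure.map_map (measurable_const_add v) (measurable_const_smul t),
    Measure.map_addHaar_smul volume ht, Measure.map_smul,
    map_add_left_eq_self volume v]
  congr 2
  rw [finrank_euclideanSpace_fin]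

lemma lint_comp_affine (t : ℝ) (ht : t ≠ 0) (v : E2) (h : E2 → ℝ≥0∞) (hh : Measurable h) :
    ∫⁻ y, h (v + t • y) = ENNReal.ofReal ((t ^ 2)⁻¹) * ∫⁻ z, h z := by
  have : ∫⁻ y, h (v + t • y) = ∫⁻ z, h z ∂(Measure.map (fun y : E2 => v + t • y) volume) := by
    rw [lintegral_map hh (by fun_prop)]
  rw [this, map_affine t ht v, lintegral_smul_measure]
  congr 1
  rw [abs_of_nonneg (by positivity)]

lemma proj_bound (a b z : E2) (hab : dist a b = 1) (t α : ℝ)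
    (h : dist z ((1 - t) • a + t • b) < α) :
    t ∈ Ioo ((inner ℝ (b - a) (z - a) : ℝ) - α) ((inner ℝ (b - a) (z - a) : ℝ) + α) := by
  have h1 : ‖b - a‖ = 1 := by rw [← dist_eq_norm']; exact hab
  have hBA : (inner ℝ (b - a) (b - a) : ℝ) = 1 := by
    rw [real_inner_self_eq_norm_mul_norm, h1]; ring
  have key : |t - (inner ℝ (b - a) (z - a) : ℝ)| < α := by
    have e0 : ((1 - t) • a + t • b) - z = (a - z) + t • (b - a) := by module
    have e1 : t - (inner ℝ (b - a) (z - a) : ℝ)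
        = (inner ℝ (b - a) (((1 - t) • a + t • b) - z) : ℝ) := by
      rw [e0, inner_add_right, real_inner_smul_right, hBA, inner_sub_right, inner_sub_right]
      ring
    rw [e1]
    calc |(inner ℝ (b - a) (((1 - t) • a + t • b) - z) : ℝ)|
        ≤ ‖b - a‖ * ‖((1 - t) • a + t • b) - z‖ := abs_real_inner_le_norm _ _
      _ = dist ((1 - t) • a + t • b) z := by rw [h1, one_mul, dist_eq_norm]
      _ < α := by rw [dist_comm]; exact h
  rw [abs_lt] at key
  exact ⟨by linarith [key.2], by linarith [key.1]⟩

lemma half (a b : E2) (α : ℝ) (hα : 0 < α) (hα8 : α < 1/8) (hab : dist a b = 1)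
    (W : Set E2) (hWm : MeasurableSet W)
    (hW : convexHull ℝ (ball a (2*α) ∪ ball b (2*α)) ⊆ W)
    (g : E2 → ℝ≥0∞) (hg : Measurable g) :
    ∫⁻ p in (ball a α ×ˢ ball b α), ∫⁻ t in Ioc (1/2 : ℝ) 1, g ((1 - t) • p.1 + t • p.2)
      ≤ volume (ball (0 : E2) 1) * ENNReal.ofReal (α ^ 3) * 8 * ∫⁻ z in W, g z := by
  have hGm : Measurable (fun q : (E2 × E2) × ℝ => g ((1 - q.2) • q.1.1 + q.2 • q.1.2)) :=
    hg.comp (by fun_prop)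
  -- membership of segment points in W
  have hhull : ∀ x ∈ ball a α, ∀ y ∈ ball b α, ∀ t : ℝ, 0 ≤ t → t ≤ 1 →
      ((1 - t) • x + t • y) ∈ W := by
    intro x hx y hy t ht0 ht1
    apply hW
    have hxM : x ∈ convexHull ℝ (ball a (2*α) ∪ ball b (2*α)) :=
      subset_convexHull ℝ _ (mem_union_left _ (ball_subset_ball (by linarith) hx))
    have hyM : y ∈ convexHull ℝ (ball a (2*α) ∪ ball b (2*α)) :=
      subset_convexHull ℝ _ (mem_union_right _ (ball_subset_ball (by linarith) hy))
    exact (convex_convexHull ℝ _) hxM hyM (by linarith) ht0 (by ring)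
  -- iterate the product integral
  have hiter :
      (∫⁻ p in (ball a α ×ˢ ball b α), ∫⁻ t in Ioc (1/2 : ℝ) 1, g ((1 - t) • p.1 + t • p.2))
        = ∫⁻ x in ball a α, ∫⁻ y in ball b α, ∫⁻ t in Ioc (1/2 : ℝ) 1,
            g ((1 - t) • x + t • y) := by
    rw [Measure.volume_eq_prod, ← Measure.prod_restrict]
    exact lintegral_prod _
      ((Measurable.lintegral_prod_right
        (f := fun (p : E2 × E2) (t : ℝ) => g ((1 - t) • p.1 + t • p.2)) hGm).aemeasurable)
  rw [hiter]
  -- the inner double integral bound, for x ∈ ball a α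
  have inner_bound : ∀ x ∈ ball a α,
      (∫⁻ y in ball b α, ∫⁻ t in Ioc (1/2 : ℝ) 1, g ((1 - t) • x + t • y))
        ≤ ENNReal.ofReal (8 * α) * ∫⁻ z in W, g z := by
    intro x hx
    have hswap : (∫⁻ y in ball b α, ∫⁻ t in Ioc (1/2 : ℝ) 1, g ((1 - t) • x + t • y))
        = ∫⁻ t in Ioc (1/2 : ℝ) 1, ∫⁻ y in ball b α, g ((1 - t) • x + t • y) := by
      apply lintegral_lintegral_swap
      exact (hg.comp (show Measurable fun q : E2 × ℝ => (1 - q.2) • x + q.2 • q.1 by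
        fun_prop)).aemeasurable
    -- indicator function in (t, z) jointly
    set F : ℝ → E2 → ℝ≥0∞ := fun t z =>
      ((ball ((1 - t) • x + t • b) (t * α)) ∩ W).indicator g z with hF
    have hFm : Measurable (Function.uncurry F) := by
      have h1 : MeasurableSet {q : ℝ × E2 | dist q.2 ((1 - q.1) • x + q.1 • b) < q.1 * α} :=
        (isOpen_lt (by fun_prop) (by fun_prop)).measurableSet
      have h2 : MeasurableSet {q : ℝ × E2 | q.2 ∈ W} := measurable_snd hWm
      have hset : MeasurableSet {q : ℝ × E2 |
          dist q.2 ((1 - q.1) • x + q.1 • b) < q.1 * α ∧ q.2 ∈ W} := h1.inter h2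
      have : Function.uncurry F = fun q : ℝ × E2 =>
          ({q : ℝ × E2 | dist q.2 ((1 - q.1) • x + q.1 • b) < q.1 * α ∧ q.2 ∈ W}).indicator
            (fun q => g q.2) q := by
        funext q
        show (ball ((1 - q.1) • x + q.1 • b) (q.1 * α) ∩ W).indicator g q.2 = _
        by_cases hq : q ∈ {q : ℝ × E2 | dist q.2 ((1 - q.1) • x + q.1 • b) < q.1 * α ∧ q.2 ∈ W}
        · rw [Set.indicator_of_mem hq]
          exact Set.indicator_of_mem (Set.mem_inter (mem_ball.2 hq.1) hq.2) g
        · rw [Set.indicator_of_notMem hq]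
          exact Set.indicator_of_notMem (fun hc => hq ⟨mem_ball.1 hc.1, hc.2⟩) g
      rw [this]
      exact (hg.comp measurable_snd).indicator hset
    -- step 1 : for t in Ioc, inner y-integral bounded by 4 ∫ F t
    have key_t : ∀ t ∈ Ioc (1/2 : ℝ) 1, (∫⁻ y in ball b α, g ((1 - t) • x + t • y))
        ≤ 4 * ∫⁻ z, F t z := by
      intro t ht
      have ht0 : (0:ℝ) < t := lt_trans (by norm_num) ht.1
      have hFtm : Measurable (F t) := hg.indicator (measurableSet_ball.inter hWm)
      have step1 : (∫⁻ y in ball b α, g ((1 - t) • x + t • y))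
          ≤ ∫⁻ y in ball b α, F t ((1 - t) • x + t • y) := by
        apply setLIntegral_mono' measurableSet_ball
        intro y hy
        have hmem : (1 - t) • x + t • y ∈ ball ((1 - t) • x + t • b) (t * α) ∩ W := by
          constructor
          · rw [mem_ball]
            have : dist ((1 - t) • x + t • y) ((1 - t) • x + t • b) = t * dist y b := by
              rw [dist_eq_norm, dist_eq_norm]
              have : ((1 - t) • x + t • y) - ((1 - t) • x + t • b) = t • (y - b) := by module
              rw [this, norm_smul, Real.norm_eq_abs, abs_of_pos ht0]
            rw [this]
            exact mul_lt_mul_of_pos_left (mem_ball.1 hy) ht0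
          · exact hhull x hx y hy t (by linarith [ht.1]) ht.2
        show g ((1 - t) • x + t • y) ≤ (ball ((1 - t) • x + t • b) (t * α) ∩ W).indicator g _
        rw [Set.indicator_of_mem hmem]
      have step2 : (∫⁻ y in ball b α, F t ((1 - t) • x + t • y))
          ≤ ∫⁻ y, F t ((1 - t) • x + t • y) := setLIntegral_le_lintegral _ _
      have step3 : (∫⁻ y, F t ((1 - t) • x + t • y))
          = ENNReal.ofReal ((t ^ 2)⁻¹) * ∫⁻ z, F t z :=
        lint_comp_affine t ht0.ne' _ (F t) hFtm
      have step4 : ENNReal.ofReal ((t ^ 2)⁻¹) ≤ 4 := by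
        rw [show (4 : ℝ≥0∞) = ENNReal.ofReal 4 by norm_num]
        apply ENNReal.ofReal_le_ofReal
        rw [inv_le_comm₀ (by positivity) (by norm_num)]
        nlinarith [ht.1]
      calc (∫⁻ y in ball b α, g ((1 - t) • x + t • y))
          ≤ ∫⁻ y, F t ((1 - t) • x + t • y) := le_trans step1 step2
        _ = ENNReal.ofReal ((t ^ 2)⁻¹) * ∫⁻ z, F t z := step3
        _ ≤ 4 * ∫⁻ z, F t z := mul_le_mul_left step4 _
    -- apply it and swap t, z
    have hmono : (∫⁻ t in Ioc (1/2 : ℝ) 1, ∫⁻ y in ball b α, g ((1 - t) • x + t • y))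
        ≤ 4 * ∫⁻ t in Ioc (1/2 : ℝ) 1, ∫⁻ z, F t z := by
      rw [← lintegral_const_mul' 4 _ (by norm_num)]
      apply setLIntegral_mono_ae' measurableSet_Ioc
      exact Filter.Eventually.of_forall key_t
    have hswap2 : (∫⁻ t in Ioc (1/2 : ℝ) 1, ∫⁻ z, F t z)
        = ∫⁻ z, ∫⁻ t in Ioc (1/2 : ℝ) 1, F t z :=
      lintegral_lintegral_swap hFm.aemeasurable
    -- pointwise in z : the t-set is short
    have hz_bound : ∀ z : E2, (∫⁻ t in Ioc (1/2 : ℝ) 1, F t z)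
        ≤ W.indicator g z * ENNReal.ofReal (2 * α) := by
      intro z
      set σ : ℝ := (inner ℝ (b - a) (z - a) : ℝ) with hσ
      have hpt : ∀ t ∈ Ioc (1/2 : ℝ) 1,
          F t z ≤ (Ioo (σ - α) (σ + α)).indicator (fun _ => W.indicator g z) t := by
        intro t ht
        show (ball ((1 - t) • x + t • b) (t * α) ∩ W).indicator g z ≤ _
        by_cases hmem : z ∈ ball ((1 - t) • x + t • b) (t * α) ∩ W
        · have hdist : dist z ((1 - t) • a + t • b) < α := by
            have h1 : dist z ((1 - t) • x + t • b) < t * α := mem_ball.1 hmem.1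
            have h2 : dist ((1 - t) • x + t • b) ((1 - t) • a + t • b)
                = (1 - t) * dist x a := by
              rw [dist_eq_norm, dist_eq_norm]
              have e : ((1 - t) • x + t • b) - ((1 - t) • a + t • b) = (1 - t) • (x - a) := by
                module
              rw [e, norm_smul, Real.norm_eq_abs, abs_of_nonneg (by linarith [ht.2])]
            have h3 : dist x a < α := mem_ball.1 hx
            have h4 : (1 - t) * dist x a ≤ (1 - t) * α := by
              apply mul_le_mul_of_nonneg_left h3.le (by linarith [ht.2])
            calc dist z ((1 - t) • a + t • b)
                ≤ dist z ((1 - t) • x + t • b) + dist ((1 - t) • x + t • b)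
                  ((1 - t) • a + t • b) := dist_triangle _ _ _
              _ < t * α + (1 - t) * α := by rw [h2]; exact add_lt_add_of_lt_of_le h1 h4
              _ = α := by ring
          have htIoo : t ∈ Ioo (σ - α) (σ + α) := proj_bound a b z hab t α hdist
          rw [Set.indicator_of_mem hmem, Set.indicator_of_mem htIoo,
            Set.indicator_of_mem hmem.2]
        · rw [Set.indicator_of_notMem hmem]
          exact zero_le
      calc (∫⁻ t in Ioc (1/2 : ℝ) 1, F t z)
          ≤ ∫⁻ t in Ioc (1/2 : ℝ) 1,
              (Ioo (σ - α) (σ + α)).indicator (fun _ => W.indicator g z) t := by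
            apply setLIntegral_mono_ae' measurableSet_Ioc
            exact Filter.Eventually.of_forall hpt
        _ ≤ ∫⁻ t, (Ioo (σ - α) (σ + α)).indicator (fun _ => W.indicator g z) t :=
            setLIntegral_le_lintegral _ _
        _ = W.indicator g z * volume (Ioo (σ - α) (σ + α)) := by
            rw [lintegral_indicator measurableSet_Ioo, setLIntegral_const]
        _ = W.indicator g z * ENNReal.ofReal (2 * α) := by
            rw [Real.volume_Ioo]
            congr 1
            ring_nf
      -- done
    have hfinal : (∫⁻ z, ∫⁻ t in Ioc (1/2 : ℝ) 1, F t z)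
        ≤ ENNReal.ofReal (2 * α) * ∫⁻ z in W, g z := by
      calc (∫⁻ z, ∫⁻ t in Ioc (1/2 : ℝ) 1, F t z)
          ≤ ∫⁻ z, W.indicator g z * ENNReal.ofReal (2 * α) :=
            lintegral_mono hz_bound
        _ = (∫⁻ z, W.indicator g z) * ENNReal.ofReal (2 * α) :=
            lintegral_mul_const' _ _ ENNReal.ofReal_ne_top
        _ = ENNReal.ofReal (2 * α) * ∫⁻ z in W, g z := by
            rw [lintegral_indicator hWm]; ring
    calc (∫⁻ y in ball b α, ∫⁻ t in Ioc (1/2 : ℝ) 1, g ((1 - t) • x + t • y))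
        = ∫⁻ t in Ioc (1/2 : ℝ) 1, ∫⁻ y in ball b α, g ((1 - t) • x + t • y) := hswap
      _ ≤ 4 * ∫⁻ t in Ioc (1/2 : ℝ) 1, ∫⁻ z, F t z := hmono
      _ = 4 * ∫⁻ z, ∫⁻ t in Ioc (1/2 : ℝ) 1, F t z := by rw [hswap2]
      _ ≤ 4 * (ENNReal.ofReal (2 * α) * ∫⁻ z in W, g z) := mul_le_mul_right hfinal _
      _ = ENNReal.ofReal (8 * α) * ∫⁻ z in W, g z := by
          rw [show (4 : ℝ≥0∞) = ENNReal.ofReal 4 by norm_num, ← mul_assoc,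
            ← ENNReal.ofReal_mul (by norm_num)]
          congr 2
          ring
  -- outer integral
  calc (∫⁻ x in ball a α, ∫⁻ y in ball b α, ∫⁻ t in Ioc (1/2 : ℝ) 1, g ((1 - t) • x + t • y))
      ≤ ∫⁻ _x in ball a α, ENNReal.ofReal (8 * α) * ∫⁻ z in W, g z :=
        setLIntegral_mono_ae' measurableSet_ball (Filter.Eventually.of_forall inner_bound)
    _ = (ENNReal.ofReal (8 * α) * ∫⁻ z in W, g z) * volume (ball a α) :=
        setLIntegral_const _ _
    _ = volume (ball (0 : E2) 1) * ENNReal.ofReal (α ^ 3) * 8 * ∫⁻ z in W, g z := by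
        rw [Measure.addHaar_ball volume a hα.le, finrank_euclideanSpace_fin]
        rw [show (8 : ℝ≥0∞) = ENNReal.ofReal 8 by norm_num]
        rw [show ENNReal.ofReal (8 * α) = ENNReal.ofReal 8 * ENNReal.ofReal α by
          rw [← ENNReal.ofReal_mul (by norm_num)]]
        rw [show ENNReal.ofReal (α ^ 3) = ENNReal.ofReal α * ENNReal.ofReal (α ^ 2) by
          rw [← ENNReal.ofReal_mul hα.le]; ring_nf]
        ring

end AvgEstAux

namespace AvgEstAux2
open AvgEstAux

lemma core (a b : E2) (α : ℝ) (hα : 0 < α) (hα8 : α < 1/8) (hab : dist a b = 1)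
    (W : Set E2) (hWm : MeasurableSet W)
    (hW : convexHull ℝ (ball a (2*α) ∪ ball b (2*α)) ⊆ W)
    (g : E2 → ℝ≥0∞) (hg : Measurable g) :
    ∫⁻ p in (ball a α ×ˢ ball b α), ∫⁻ t in Icc (0:ℝ) 1, g ((1 - t) • p.1 + t • p.2)
      ≤ volume (ball (0 : E2) 1) * ENNReal.ofReal (α ^ 3) * 16 * ∫⁻ z in W, g z := by
  have hsplit : ∀ p : E2 × E2,
      (∫⁻ t in Icc (0:ℝ) 1, g ((1 - t) • p.1 + t • p.2))
        ≤ (∫⁻ t in Icc (0:ℝ) (1/2), g ((1 - t) • p.1 + t • p.2))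
          + ∫⁻ t in Ioc (1/2:ℝ) 1, g ((1 - t) • p.1 + t • p.2) := by
    intro p
    rw [show Icc (0:ℝ) 1 = Icc (0:ℝ) (1/2) ∪ Ioc (1/2:ℝ) 1 from
      (Set.Icc_union_Ioc_eq_Icc (by norm_num) (by norm_num)).symm]
    exact lintegral_union_le _ _ _
  have hmeas1 : Measurable fun p : E2 × E2 =>
      ∫⁻ t in Icc (0:ℝ) (1/2), g ((1 - t) • p.1 + t • p.2) :=
    Measurable.lintegral_prod_right
      (f := fun (p : E2 × E2) (t : ℝ) => g ((1 - t) • p.1 + t • p.2)) (hg.comp (by fun_prop))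
  -- the second (main) half
  have second_half :
      (∫⁻ p in (ball a α ×ˢ ball b α), ∫⁻ t in Ioc (1/2:ℝ) 1, g ((1 - t) • p.1 + t • p.2))
        ≤ volume (ball (0 : E2) 1) * ENNReal.ofReal (α ^ 3) * 8 * ∫⁻ z in W, g z :=
    half a b α hα hα8 hab W hWm hW g hg
  -- the first half, by symmetry
  have first_half :
      (∫⁻ p in (ball a α ×ˢ ball b α), ∫⁻ t in Icc (0:ℝ) (1/2), g ((1 - t) • p.1 + t • p.2))
        ≤ volume (ball (0 : E2) 1) * ENNReal.ofReal (α ^ 3) * 8 * ∫⁻ z in W, g z := by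
    have hinner : ∀ p : E2 × E2,
        (∫⁻ t in Icc (0:ℝ) (1/2), g ((1 - t) • p.1 + t • p.2))
          = ∫⁻ u in Ioc (1/2:ℝ) 1, g ((1 - u) • p.2 + u • p.1) := by
      intro p
      have hmp : MeasurePreserving (fun t : ℝ => 1 - t) volume volume :=
        Measure.measurePreserving_sub_left volume 1
      have hemb : MeasurableEmbedding (fun t : ℝ => 1 - t) :=
        (Homeomorph.subLeft (1:ℝ)).measurableEmbedding
      have hfun : (fun t : ℝ => g ((1 - t) • p.1 + t • p.2))
          = fun t : ℝ => (fun u : ℝ => g ((1 - u) • p.2 + u • p.1)) (1 - t) := by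
        funext t
        simp only []
        congr 1
        module
      have hpre : (fun t : ℝ => 1 - t) ⁻¹' (Icc (1/2:ℝ) 1) = Icc (0:ℝ) (1/2) := by
        rw [Set.preimage_const_sub_Icc]
        norm_num
      calc (∫⁻ t in Icc (0:ℝ) (1/2), g ((1 - t) • p.1 + t • p.2))
          = ∫⁻ t in (fun t : ℝ => 1 - t) ⁻¹' (Icc (1/2:ℝ) 1),
              (fun u : ℝ => g ((1 - u) • p.2 + u • p.1)) (1 - t) := by
            rw [hpre]
            exact lintegral_congr fun t => congrFun hfun t
        _ = ∫⁻ u in Icc (1/2:ℝ) 1, g ((1 - u) • p.2 + u • p.1) :=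
            hmp.setLIntegral_comp_preimage_emb hemb (fun u : ℝ => g ((1 - u) • p.2 + u • p.1)) (Icc (1/2:ℝ) 1)
        _ = ∫⁻ u in Ioc (1/2:ℝ) 1, g ((1 - u) • p.2 + u • p.1) :=
            (setLIntegral_congr Ioc_ae_eq_Icc).symm
    have houter :
        (∫⁻ p in (ball a α ×ˢ ball b α), ∫⁻ u in Ioc (1/2:ℝ) 1, g ((1 - u) • p.2 + u • p.1))
          = ∫⁻ q in (ball b α ×ˢ ball a α), ∫⁻ u in Ioc (1/2:ℝ) 1, g ((1 - u) • q.1 + u • q.2)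
          := by
      rw [Measure.volume_eq_prod, ← Measure.prod_restrict, ← Measure.prod_restrict]
      exact lintegral_prod_swap
        (fun q : E2 × E2 => ∫⁻ u in Ioc (1/2:ℝ) 1, g ((1 - u) • q.1 + u • q.2))
    have hW' : convexHull ℝ (ball b (2*α) ∪ ball a (2*α)) ⊆ W := by
      rwa [Set.union_comm]
    calc (∫⁻ p in (ball a α ×ˢ ball b α), ∫⁻ t in Icc (0:ℝ) (1/2), g ((1 - t) • p.1 + t • p.2))
        = ∫⁻ p in (ball a α ×ˢ ball b α), ∫⁻ u in Ioc (1/2:ℝ) 1, g ((1 - u) • p.2 + u • p.1) :=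
          lintegral_congr fun p => hinner p
      _ = ∫⁻ q in (ball b α ×ˢ ball a α), ∫⁻ u in Ioc (1/2:ℝ) 1, g ((1 - u) • q.1 + u • q.2) :=
          houter
      _ ≤ volume (ball (0 : E2) 1) * ENNReal.ofReal (α ^ 3) * 8 * ∫⁻ z in W, g z :=
          half b a α hα hα8 (by rwa [dist_comm]) W hWm hW' g hg
  calc (∫⁻ p in (ball a α ×ˢ ball b α), ∫⁻ t in Icc (0:ℝ) 1, g ((1 - t) • p.1 + t • p.2))
      ≤ ∫⁻ p in (ball a α ×ˢ ball b α),
          ((∫⁻ t in Icc (0:ℝ) (1/2), g ((1 - t) • p.1 + t • p.2))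
            + ∫⁻ t in Ioc (1/2:ℝ) 1, g ((1 - t) • p.1 + t • p.2)) :=
        lintegral_mono hsplit
    _ = (∫⁻ p in (ball a α ×ˢ ball b α), ∫⁻ t in Icc (0:ℝ) (1/2), g ((1 - t) • p.1 + t • p.2))
        + ∫⁻ p in (ball a α ×ˢ ball b α), ∫⁻ t in Ioc (1/2:ℝ) 1, g ((1 - t) • p.1 + t • p.2) :=
        lintegral_add_left hmeas1 _
    _ ≤ (volume (ball (0 : E2) 1) * ENNReal.ofReal (α ^ 3) * 8 * ∫⁻ z in W, g z)
        + volume (ball (0 : E2) 1) * ENNReal.ofReal (α ^ 3) * 8 * ∫⁻ z in W, g z :=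
        add_le_add first_half second_half
    _ = volume (ball (0 : E2) 1) * ENNReal.ofReal (α ^ 3) * 16 * ∫⁻ z in W, g z := by
        ring

end AvgEstAux2

end AuxProofs

open Set Metric Pointwise ENNReal AvgEstAux AvgEstAux2 in
theorem averaging_estimate :
    ∃ C : ℝ, 0 < C ∧
      ∀ (x₀ y₀ : E2) (α : ℝ) (f : E2 → ℝ),
        dist x₀ y₀ = 1 → 0 < α → α < 1 / 8 → (∀ z, 0 ≤ f z) →
        IntegrableOn f (convexHull ℝ (Metric.ball x₀ (2 * α) ∪ Metric.ball y₀ (2 * α))) →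
        (∫ p in (Metric.ball x₀ α ×ˢ Metric.ball y₀ α),
            (∫ t in Set.Icc (0 : ℝ) 1, f ((1 - t) • p.1 + t • p.2) * dist p.1 p.2)) ≤
          C * α ^ 3 *
            ∫ z in convexHull ℝ (Metric.ball x₀ (2 * α) ∪ Metric.ball y₀ (2 * α)), f z := by
  classical
  refine ⟨32 * (volume (ball (0 : E2) 1)).toReal + 1, by positivity, ?_⟩
  intro x₀ y₀ α f hdist hα hα8 hf hInt
  set V : ℝ≥0∞ := volume (ball (0 : E2) 1) with hV
  have hVne : V ≠ ⊤ := measure_ball_lt_top.ne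
  set M : Set E2 := convexHull ℝ (ball x₀ (2*α) ∪ ball y₀ (2*α)) with hM
  have hMconv : Convex ℝ M := convex_convexHull ℝ _
  have hMnull : NullMeasurableSet M volume := hMconv.nullMeasurableSet volume
  have hMsub : M ⊆ closedBall x₀ 2 := by
    rw [hM]
    apply convexHull_min _ (convex_closedBall _ _)
    apply Set.union_subset
    · intro z hz
      have := mem_ball.1 hz
      exact mem_closedBall.2 (by linarith)
    · intro z hz
      have h1 := mem_ball.1 hz
      have h2 : dist z x₀ ≤ dist z y₀ + dist y₀ x₀ := dist_triangle _ _ _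
      have h3 : dist y₀ x₀ = 1 := by rw [dist_comm]; exact hdist
      exact mem_closedBall.2 (by linarith)
  have hMfin : volume M ≠ ⊤ :=
    ((measure_mono hMsub).trans_lt measure_closedBall_lt_top).ne
  set W := toMeasurable volume M with hW
  have hMW : M ⊆ W := subset_toMeasurable _ _
  have hWmeas : MeasurableSet W := measurableSet_toMeasurable _ _
  have hWM0 : volume (W \ M) = 0 := by
    rw [measure_diff hMW hMnull hMfin, measure_toMeasurable]
    simp
  have hWeq : (volume : Measure E2).restrict W = volume.restrict M := by
    apply Measure.restrict_congr_set
    rw [MeasureTheory.ae_eq_set]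
    exact ⟨hWM0, by simp [Set.diff_eq_empty.2 hMW]⟩
  -- measurable nonnegative representative of f
  have hsm := hInt.aestronglyMeasurable
  set f₀ : E2 → ℝ := hsm.mk f with hf₀
  have hf₀m : Measurable f₀ := hsm.stronglyMeasurable_mk.measurable
  set fm : E2 → ℝ := fun z => max (f₀ z) 0 with hfm
  have hfmm : Measurable fm := hf₀m.max measurable_const
  have hfm0 : ∀ z, 0 ≤ fm z := fun z => le_max_right _ _
  have hae : f =ᵐ[volume.restrict M] fm := by
    filter_upwards [hsm.ae_eq_mk] with z hz
    rw [← hf₀] at hz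
    show f z = max (f₀ z) 0
    rw [← hz]
    exact (max_eq_left (hf z)).symm
  set g : E2 → ℝ≥0∞ := fun z => ENNReal.ofReal (fm z) with hg
  have hgm : Measurable g := ENNReal.measurable_ofReal.comp hfmm
  -- the exceptional null set
  have hnull0 : (volume.restrict M) {z | ¬ (f z = fm z)} = 0 := ae_iff.1 hae
  obtain ⟨T, hT_sup, hTm, hT0⟩ := exists_measurable_superset_of_null hnull0
  have hTM : volume (T ∩ M) = 0 := by rw [← Measure.restrict_apply hTm]; exact hT0
  set T' := toMeasurable volume (T ∩ M) with hT'
  have hT'm : MeasurableSet T' := measurableSet_toMeasurable _ _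
  have hT'0 : volume T' = 0 := by rw [measure_toMeasurable]; exact hTM
  have hT'sub : ∀ z, z ∈ M → f z ≠ fm z → z ∈ T' :=
    fun z hzM hzf => subset_toMeasurable _ _ ⟨hT_sup hzf, hzM⟩
  -- segment points are in M
  set S : Set (E2 × E2) := ball x₀ α ×ˢ ball y₀ α with hS
  have hSopen : IsOpen S := isOpen_ball.prod isOpen_ball
  have hseg : ∀ p : E2 × E2, p ∈ S → ∀ t ∈ Icc (0:ℝ) 1,
      ((1 - t) • p.1 + t • p.2) ∈ M := by
    intro p hp t ht
    have hx := (Set.mem_prod.1 hp).1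
    have hy := (Set.mem_prod.1 hp).2
    rw [hM]
    exact (convex_convexHull ℝ _)
      (subset_convexHull ℝ _ (mem_union_left _ (ball_subset_ball (by linarith) hx)))
      (subset_convexHull ℝ _ (mem_union_right _ (ball_subset_ball (by linarith) hy)))
      (by linarith [ht.2]) ht.1 (by ring)
  -- null set in the product space
  set N : Set ((E2 × E2) × ℝ) := {q | q.1 ∈ S ∧ q.2 ∈ Icc (0:ℝ) 1
      ∧ ((1 - q.2) • q.1.1 + q.2 • q.1.2) ∈ T'} with hN
  have hNm : MeasurableSet N := by
    have h1 : MeasurableSet {q : (E2 × E2) × ℝ | q.1 ∈ S} :=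
      measurable_fst hSopen.measurableSet
    have h2 : MeasurableSet {q : (E2 × E2) × ℝ | q.2 ∈ Icc (0:ℝ) 1} :=
      measurable_snd measurableSet_Icc
    have h3 : MeasurableSet {q : (E2 × E2) × ℝ | ((1 - q.2) • q.1.1 + q.2 • q.1.2) ∈ T'} :=
      (show Measurable fun q : (E2 × E2) × ℝ => (1 - q.2) • q.1.1 + q.2 • q.1.2 by fun_prop) hT'm
    exact h1.inter (h2.inter h3)
  have hNnull : ((volume : Measure (E2 × E2)).prod (volume : Measure ℝ)) N = 0 := by
    have hNm' : MeasurableSet (Prod.swap ⁻¹' N : Set (ℝ × (E2 × E2))) :=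
      hNm.preimage measurable_swap
    have hsec : ∀ t : ℝ, t ≠ 0 →
        (volume : Measure (E2 × E2)) {p : E2 × E2 | ((1 - t) • p.1 + t • p.2) ∈ T'} = 0 := by
      intro t ht
      have hmeasp : MeasurableSet {p : E2 × E2 | ((1 - t) • p.1 + t • p.2) ∈ T'} :=
        (show Measurable fun p : E2 × E2 => (1 - t) • p.1 + t • p.2 by fun_prop) hT'm
      rw [Measure.volume_eq_prod, Measure.measure_prod_null hmeasp]
      refine Filter.Eventually.of_forall fun x => ?_
      exact null_preimage_affine ht ((1 - t) • x) hT'0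
    have key : ((volume : Measure ℝ).prod (volume : Measure (E2 × E2))) (Prod.swap ⁻¹' N) = 0 := by
      rw [Measure.measure_prod_null hNm']
      have h0 : ∀ᵐ t : ℝ ∂volume, t ≠ 0 := by
        have : {t : ℝ | ¬ t ≠ 0} = {0} := by ext t; simp
        rw [ae_iff, this]
        exact measure_singleton 0
      filter_upwards [h0] with t ht
      exact measure_mono_null (fun p hp => hp.2.2) (hsec t ht)
    calc ((volume : Measure (E2 × E2)).prod (volume : Measure ℝ)) N
        = (Measure.map Prod.swap ((volume : Measure ℝ).prod (volume : Measure (E2 × E2)))) N := by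
          rw [Measure.prod_swap]
      _ = ((volume : Measure ℝ).prod (volume : Measure (E2 × E2))) (Prod.swap ⁻¹' N) :=
          Measure.map_apply measurable_swap hNm
      _ = 0 := key
  -- a.e. replacement of f by fm in the iterated integral
  have hae_sections : ∀ᵐ p ∂((volume : Measure (E2 × E2)).restrict S),
      (∫⁻ t in Icc (0:ℝ) 1, ENNReal.ofReal (f ((1 - t) • p.1 + t • p.2) * dist p.1 p.2))
        = ∫⁻ t in Icc (0:ℝ) 1, ENNReal.ofReal (fm ((1 - t) • p.1 + t • p.2) * dist p.1 p.2) := by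
    have h1 : ∀ᵐ p ∂(volume : Measure (E2 × E2)), (volume : Measure ℝ) (Prod.mk p ⁻¹' N) = 0 := by
      have := (Measure.measure_prod_null (μ := (volume : Measure (E2 × E2)))
        (ν := (volume : Measure ℝ)) hNm).1 hNnull
      exact this
    have h2 : ∀ᵐ p ∂((volume : Measure (E2 × E2)).restrict S),
        (volume : Measure ℝ) (Prod.mk p ⁻¹' N) = 0 := ae_restrict_of_ae h1
    filter_upwards [h2, ae_restrict_mem hSopen.measurableSet] with p hp hpS
    apply lintegral_congr_ae
    have h3 : ∀ᵐ t ∂(volume : Measure ℝ), (p, t) ∉ N := by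
      have he : {t : ℝ | ¬ (p, t) ∉ N} = Prod.mk p ⁻¹' N := by
        ext t; simp [Set.mem_preimage]
      rw [ae_iff, he]
      exact hp
    filter_upwards [ae_restrict_of_ae h3, ae_restrict_mem measurableSet_Icc] with t htN htI
    have heq : f ((1 - t) • p.1 + t • p.2) = fm ((1 - t) • p.1 + t • p.2) := by
      by_contra hfz
      exact htN ⟨hpS, htI, hT'sub _ (hseg p hpS t htI) hfz⟩
    rw [heq]
  -- chain of inequalities
  have hGnn : ∀ p : E2 × E2,
      0 ≤ ∫ t in Icc (0:ℝ) 1, f ((1 - t) • p.1 + t • p.2) * dist p.1 p.2 :=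
    fun p => integral_nonneg fun t => mul_nonneg (hf _) dist_nonneg
  have step1 : (∫ p in S, ∫ t in Icc (0:ℝ) 1, f ((1 - t) • p.1 + t • p.2) * dist p.1 p.2)
      ≤ (∫⁻ p in S,
          ENNReal.ofReal (∫ t in Icc (0:ℝ) 1, f ((1 - t) • p.1 + t • p.2) * dist p.1 p.2)).toReal :=
    integral_le_lintegral_ofReal _ _ hGnn
  have step2 : (∫⁻ p in S,
        ENNReal.ofReal (∫ t in Icc (0:ℝ) 1, f ((1 - t) • p.1 + t • p.2) * dist p.1 p.2))
      ≤ ∫⁻ p in S, ∫⁻ t in Icc (0:ℝ) 1,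
          ENNReal.ofReal (f ((1 - t) • p.1 + t • p.2) * dist p.1 p.2) :=
    lintegral_mono fun p => ofReal_integral_le_lintegral _ _
      (fun t => mul_nonneg (hf _) dist_nonneg)
  have step3 : (∫⁻ p in S, ∫⁻ t in Icc (0:ℝ) 1,
        ENNReal.ofReal (f ((1 - t) • p.1 + t • p.2) * dist p.1 p.2))
      = ∫⁻ p in S, ∫⁻ t in Icc (0:ℝ) 1,
          ENNReal.ofReal (fm ((1 - t) • p.1 + t • p.2) * dist p.1 p.2) :=
    lintegral_congr_ae hae_sections
  have step4 : (∫⁻ p in S, ∫⁻ t in Icc (0:ℝ) 1,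
        ENNReal.ofReal (fm ((1 - t) • p.1 + t • p.2) * dist p.1 p.2))
      ≤ 2 * ∫⁻ p in S, ∫⁻ t in Icc (0:ℝ) 1, g ((1 - t) • p.1 + t • p.2) := by
    simp only [hg]
    rw [← lintegral_const_mul' 2 _ (by norm_num)]
    apply lintegral_mono_ae
    filter_upwards [ae_restrict_mem hSopen.measurableSet] with p hpS
    have hd : dist p.1 p.2 ≤ 2 := by
      have h1 : dist p.1 x₀ < α := mem_ball.1 (Set.mem_prod.1 hpS).1
      have h2 : dist p.2 y₀ < α := mem_ball.1 (Set.mem_prod.1 hpS).2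
      have h3 : dist y₀ p.2 = dist p.2 y₀ := dist_comm _ _
      calc dist p.1 p.2 ≤ dist p.1 x₀ + dist x₀ y₀ + dist y₀ p.2 := dist_triangle4 _ _ _ _
        _ ≤ α + 1 + α := by rw [hdist, h3]; linarith
        _ ≤ 2 := by linarith
    calc (∫⁻ t in Icc (0:ℝ) 1, ENNReal.ofReal (fm ((1 - t) • p.1 + t • p.2) * dist p.1 p.2))
        ≤ ∫⁻ t in Icc (0:ℝ) 1, 2 * ENNReal.ofReal (fm ((1 - t) • p.1 + t • p.2)) := by
          apply lintegral_mono
          intro t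
          dsimp only
          rw [ENNReal.ofReal_mul (hfm0 _)]
          calc ENNReal.ofReal (fm ((1 - t) • p.1 + t • p.2)) * ENNReal.ofReal (dist p.1 p.2)
              ≤ ENNReal.ofReal (fm ((1 - t) • p.1 + t • p.2)) * ENNReal.ofReal 2 :=
                mul_le_mul_right (ENNReal.ofReal_le_ofReal hd) _
            _ = 2 * ENNReal.ofReal (fm ((1 - t) • p.1 + t • p.2)) := by
                rw [mul_comm]
                congr 1
                norm_num
      _ = 2 * ∫⁻ t in Icc (0:ℝ) 1, ENNReal.ofReal (fm ((1 - t) • p.1 + t • p.2)) :=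
          lintegral_const_mul' 2 _ (by norm_num)
  have step5 : (∫⁻ p in S, ∫⁻ t in Icc (0:ℝ) 1, g ((1 - t) • p.1 + t • p.2))
      ≤ V * ENNReal.ofReal (α ^ 3) * 16 * ∫⁻ z in W, g z :=
    core x₀ y₀ α hα hα8 hdist W hWmeas (by rw [← hM]; exact hMW) g hgm
  have hWg : (∫⁻ z in W, g z) = ENNReal.ofReal (∫ z in M, f z) := by
    rw [hWeq]
    rw [ofReal_integral_eq_lintegral_ofReal hInt (Filter.Eventually.of_forall fun z => hf z)]
    simp only [hg]
    exact (lintegral_congr_ae (hae.mono fun z hz =>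
      show ENNReal.ofReal (f z) = ENNReal.ofReal (fm z) by rw [hz])).symm
  have hIntnn : 0 ≤ ∫ z in M, f z := integral_nonneg fun z => hf z
  set R : ℝ≥0∞ := 2 * (V * ENNReal.ofReal (α ^ 3) * 16 * ENNReal.ofReal (∫ z in M, f z))
    with hR
  have hRne : R ≠ ⊤ := by
    rw [hR]
    apply ENNReal.mul_ne_top (by norm_num)
    apply ENNReal.mul_ne_top _ ENNReal.ofReal_ne_top
    apply ENNReal.mul_ne_top _ (by norm_num)
    exact ENNReal.mul_ne_top hVne ENNReal.ofReal_ne_top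
  have hchain : (∫⁻ p in S,
        ENNReal.ofReal (∫ t in Icc (0:ℝ) 1, f ((1 - t) • p.1 + t • p.2) * dist p.1 p.2)) ≤ R := by
    calc (∫⁻ p in S,
          ENNReal.ofReal (∫ t in Icc (0:ℝ) 1, f ((1 - t) • p.1 + t • p.2) * dist p.1 p.2))
        ≤ ∫⁻ p in S, ∫⁻ t in Icc (0:ℝ) 1,
            ENNReal.ofReal (f ((1 - t) • p.1 + t • p.2) * dist p.1 p.2) := step2
      _ = ∫⁻ p in S, ∫⁻ t in Icc (0:ℝ) 1,
            ENNReal.ofReal (fm ((1 - t) • p.1 + t • p.2) * dist p.1 p.2) := step3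
      _ ≤ 2 * ∫⁻ p in S, ∫⁻ t in Icc (0:ℝ) 1, g ((1 - t) • p.1 + t • p.2) := step4
      _ ≤ 2 * (V * ENNReal.ofReal (α ^ 3) * 16 * ∫⁻ z in W, g z) :=
          mul_le_mul_right step5 _
      _ = R := by rw [hR, hWg]
  have htoReal : R.toReal = 32 * V.toReal * α ^ 3 * (∫ z in M, f z) := by
    rw [hR]
    rw [ENNReal.toReal_mul, ENNReal.toReal_mul, ENNReal.toReal_mul, ENNReal.toReal_mul,
      ENNReal.toReal_ofReal (by positivity), ENNReal.toReal_ofReal hIntnn]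
    norm_num
    ring
  calc (∫ p in S, ∫ t in Icc (0:ℝ) 1, f ((1 - t) • p.1 + t • p.2) * dist p.1 p.2)
      ≤ (∫⁻ p in S,
          ENNReal.ofReal (∫ t in Icc (0:ℝ) 1, f ((1 - t) • p.1 + t • p.2) * dist p.1 p.2)).toReal :=
        step1
    _ ≤ R.toReal := ENNReal.toReal_mono hRne hchain
    _ = 32 * V.toReal * α ^ 3 * (∫ z in M, f z) := htoReal
    _ ≤ (32 * V.toReal + 1) * α ^ 3 * ∫ z in M, f z := by
        have h1 : (0:ℝ) ≤ α ^ 3 := by positivity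
        have h2 : (0:ℝ) ≤ V.toReal := ENNReal.toReal_nonneg
        nlinarith [mul_nonneg h1 hIntnn]

end
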